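/- For C ∈ ℂ with C ∉ {0, ±1, ±√2}, the functions X₁(t) = t - C² and X₂(t) = √((t-1)(tC² - 2t + C²)) are two linearly independent solutions of the differential equation t(-C² + 2t + (C²-2)t²)·X'' - (t - C²)·X' = -X (i.e., the case λ = -1). -/

import Mathlib

/-- For `C ∉ {0, ±1, ±√2}`, `X₁ t = t - C²` and `X₂ t = √((t-1)(tC² - 2t + C²))`
(the latter given as any differentiable branch of the square root on an open set `s`)
are two linearly independent solutions of
`t(-C² + 2t + (C²-2)t²)·X'' - (t - C²)·X' = -X`. -/
theorem lambda_neg_one_solutions (C : ℂ) (hC0 : C ≠ 0) (hC1 : C ≠ 1) (hC1' : C ≠ -1)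
    (hC2 : C ^ 2 ≠ 2) (s : Set ℂ) (hs : IsOpen s) (hsne : s.Nonempty)
    (X₂ : ℂ → ℂ) (hX₂d : DifferentiableOn ℂ X₂ s)
    (hX₂ : ∀ t ∈ s, (X₂ t) ^ 2 = (t - 1) * (t * C ^ 2 - 2 * t + C ^ 2)) :
    let X₁ : ℂ → ℂ := fun t => t - C ^ 2
    (∀ t ∈ s, t * (-C ^ 2 + 2 * t + (C ^ 2 - 2) * t ^ 2) * deriv (deriv X₁) t
        - (t - C ^ 2) * deriv X₁ t = -(X₁ t)) ∧
    (∀ t ∈ s, t * (-C ^ 2 + 2 * t + (C ^ 2 - 2) * t ^ 2) * deriv (deriv X₂) t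
        - (t - C ^ 2) * deriv X₂ t = -(X₂ t)) ∧
    (∀ a b : ℂ, (∀ t ∈ s, a * X₁ t + b * X₂ t = 0) → a = 0 ∧ b = 0) := by
  intro X₁
  -- `C² - 1 ≠ 0`
  have hCsq : C ^ 2 - 1 ≠ 0 := by
    intro h
    have : (C - 1) * (C + 1) = 0 := by linear_combination h
    rcases mul_eq_zero.1 this with h' | h'
    · exact hC1 (by linear_combination h')
    · exact hC1' (by linear_combination h')
  -- expanded form of the square relation
  have hP : ∀ t ∈ s, (X₂ t) ^ 2 = (C ^ 2 - 2) * t ^ 2 + 2 * t - C ^ 2 := by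
    intro t ht; rw [hX₂ t ht]; ring
  have hYd : ∀ t ∈ s, DifferentiableAt ℂ X₂ t := fun t ht =>
    hX₂d.differentiableAt (hs.mem_nhds ht)
  have hY'd : ∀ t ∈ s, DifferentiableAt ℂ (deriv X₂) t := by
    intro t ht
    exact ((hX₂d.analyticOnNhd hs).deriv t ht).differentiableAt
  -- first derivative relation: 2 Y Y' = P'
  have hY1 : ∀ t ∈ s, 2 * X₂ t * deriv X₂ t = 2 * (C ^ 2 - 2) * t + 2 := by
    intro t ht
    have heq : (fun x => X₂ x ^ 2) =ᶠ[nhds t]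
        (fun x => (C ^ 2 - 2) * x ^ 2 + 2 * x - C ^ 2) :=
      Filter.eventuallyEq_of_mem (hs.mem_nhds ht) (fun x hx => hP x hx)
    have h1 := heq.deriv_eq
    have hl : deriv (fun x => X₂ x ^ 2) t = 2 * X₂ t * deriv X₂ t := by
      have : deriv (fun x => X₂ x ^ 2) t = _ := ((hYd t ht).hasDerivAt.pow 2).deriv
      rw [this]; push_cast; ring
    have hr : deriv (fun x => (C ^ 2 - 2) * x ^ 2 + 2 * x - C ^ 2) t
        = 2 * (C ^ 2 - 2) * t + 2 := by
      have h : HasDerivAt (fun x : ℂ => (C ^ 2 - 2) * x ^ 2 + 2 * x - C ^ 2)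
          ((C ^ 2 - 2) * (2 * t ^ 1) + 2 * 1) t :=
        (((hasDerivAt_pow 2 t).const_mul (C ^ 2 - 2)).add
          ((hasDerivAt_id t).const_mul 2)).sub_const (C ^ 2)
      rw [h.deriv]; push_cast; ring
    rw [hl, hr] at h1
    exact h1
  -- second derivative relation: 2 Y'² + 2 Y Y'' = P''
  have hY2 : ∀ t ∈ s, 2 * (deriv X₂ t) ^ 2 + 2 * X₂ t * deriv (deriv X₂) t
      = 2 * (C ^ 2 - 2) := by
    intro t ht
    have heq : (fun x => 2 * X₂ x * deriv X₂ x) =ᶠ[nhds t]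
        (fun x => 2 * (C ^ 2 - 2) * x + 2) :=
      Filter.eventuallyEq_of_mem (hs.mem_nhds ht) (fun x hx => hY1 x hx)
    have h1 := heq.deriv_eq
    have hl : deriv (fun x => 2 * X₂ x * deriv X₂ x) t
        = 2 * deriv X₂ t * deriv X₂ t + 2 * X₂ t * deriv (deriv X₂) t := by
      have h : HasDerivAt (fun x => 2 * X₂ x * deriv X₂ x)
          (2 * deriv X₂ t * deriv X₂ t + 2 * X₂ t * deriv (deriv X₂) t) t :=
        (((hYd t ht).hasDerivAt.const_mul 2).mul (hY'd t ht).hasDerivAt)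
      exact h.deriv
    have hr : deriv (fun x : ℂ => 2 * (C ^ 2 - 2) * x + 2) t = 2 * (C ^ 2 - 2) := by
      have h : HasDerivAt (fun x : ℂ => 2 * (C ^ 2 - 2) * x + 2)
          (2 * (C ^ 2 - 2) * 1) t :=
        ((hasDerivAt_id t).const_mul (2 * (C ^ 2 - 2))).add_const 2
      rw [h.deriv]; ring
    rw [hl, hr] at h1
    linear_combination h1
  -- nonvanishing of X₂ on s
  have hY0 : ∀ t ∈ s, X₂ t ≠ 0 := by
    intro t ht h0
    have e1 := hY1 t ht
    have eP := hP t ht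
    rw [h0] at e1 eP
    have h : (C ^ 2 - 1) ^ 2 = 0 := by
      linear_combination (-(1 : ℂ)/2 - (C ^ 2 - 2) * t / 2) * e1 + (C ^ 2 - 2) * eP
    exact hCsq (pow_eq_zero_iff (two_ne_zero) |>.1 h)
  -- first derivative of X₁
  have hd1 : deriv X₁ = fun _ => (1 : ℂ) := by
    funext x
    have h : HasDerivAt X₁ 1 x := (hasDerivAt_id x).sub_const (C ^ 2)
    exact h.deriv
  refine ⟨?_, ?_, ?_⟩
  · intro t ht
    rw [hd1]
    have h2 : deriv (fun _ : ℂ => (1 : ℂ)) = fun _ => (0 : ℂ) := by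
      funext x; exact deriv_const x 1
    rw [h2]
    show t * (-C ^ 2 + 2 * t + (C ^ 2 - 2) * t ^ 2) * 0 - (t - C ^ 2) * 1 = -(t - C ^ 2)
    ring
  · intro t ht
    have e1 := hY1 t ht
    have e2 := hY2 t ht
    have eP := hP t ht
    have hY0t := hY0 t ht
    have key : 2 * (X₂ t) ^ 2 *
        (t * (-C ^ 2 + 2 * t + (C ^ 2 - 2) * t ^ 2) * deriv (deriv X₂) t
          - (t - C ^ 2) * deriv X₂ t + X₂ t) = 0 := by
      linear_combination
        (t * ((C ^ 2 - 2) * t ^ 2 + 2 * t - C ^ 2) * X₂ t) * e2 +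
        (-(t * ((C ^ 2 - 2) * t ^ 2 + 2 * t - C ^ 2) * deriv X₂ t)
          - (t - C ^ 2) * X₂ t - (t * (2 * (C ^ 2 - 2) * t + 2) / 2) * X₂ t) * e1 +
        (2 * X₂ t + t * (2 * (C ^ 2 - 2) * t + 2) * deriv X₂ t) * eP
    have h2 : (2 : ℂ) * (X₂ t) ^ 2 ≠ 0 := by
      simp [hY0t]
    have := (mul_eq_zero.1 key).resolve_left h2
    linear_combination this
  · intro a b hab
    by_cases hb : b = 0
    · subst hb
      obtain ⟨t₀, ht₀⟩ := hsne
      obtain ⟨r, hr, hball⟩ := Metric.isOpen_iff.1 hs t₀ ht₀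
      have hdist : dist (t₀ + (r : ℂ) / 2) t₀ = r / 2 := by
        rw [Complex.dist_eq]
        have h' : t₀ + (r : ℂ) / 2 - t₀ = ((r / 2 : ℝ) : ℂ) := by push_cast; ring
        rw [h', Complex.norm_real, Real.norm_eq_abs, abs_of_pos (by linarith)]
      have ht₁ : t₀ + (r : ℂ) / 2 ∈ s := by
        apply hball
        rw [Metric.mem_ball, hdist]
        linarith
      have h0 := hab t₀ ht₀
      have h1 := hab (t₀ + r / 2) ht₁
      simp only [X₁, mul_zero, add_zero, zero_mul] at h0 h1
      constructor
      · by_contra ha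
        have e0 : t₀ - C ^ 2 = 0 := by
          rcases mul_eq_zero.1 h0 with h | h
          · exact absurd h ha
          · exact h
        have e1 : t₀ + (r : ℂ) / 2 - C ^ 2 = 0 := by
          rcases mul_eq_zero.1 h1 with h | h
          · exact absurd h ha
          · exact h
        have : (r : ℂ) / 2 = 0 := by linear_combination e1 - e0
        have hr0 : (r : ℂ) = 0 := by linear_combination 2 * this
        exact absurd (Complex.ofReal_eq_zero.1 hr0) (ne_of_gt hr)
      · rfl
    · exfalso
      obtain ⟨t₀, ht₀⟩ := hsne
      -- first derivative of the linear relation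
      have hrel1 : ∀ t ∈ s, a + b * deriv X₂ t = 0 := by
        intro t ht
        have heq : (fun x => a * (x - C ^ 2) + b * X₂ x) =ᶠ[nhds t]
            (fun _ => (0 : ℂ)) :=
          Filter.eventuallyEq_of_mem (hs.mem_nhds ht) (fun x hx => hab x hx)
        have h1 := heq.deriv_eq
        have hl : deriv (fun x => a * (x - C ^ 2) + b * X₂ x) t
            = a * 1 + b * deriv X₂ t := by
          have h : HasDerivAt (fun x => a * (x - C ^ 2) + b * X₂ x)
              (a * 1 + b * deriv X₂ t) t :=
            (((hasDerivAt_id t).sub_const (C ^ 2)).const_mul a).add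
              ((hYd t ht).hasDerivAt.const_mul b)
          exact h.deriv
        rw [hl, deriv_const] at h1
        linear_combination h1
      -- second derivative of the linear relation
      have hrel2 : b * deriv (deriv X₂) t₀ = 0 := by
        have heq : (fun x => a + b * deriv X₂ x) =ᶠ[nhds t₀]
            (fun _ => (0 : ℂ)) :=
          Filter.eventuallyEq_of_mem (hs.mem_nhds ht₀) (fun x hx => hrel1 x hx)
        have h1 := heq.deriv_eq
        have hl : deriv (fun x => a + b * deriv X₂ x) t₀
            = b * deriv (deriv X₂) t₀ := by
          have h : HasDerivAt (fun x => a + b * deriv X₂ x)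
              (b * deriv (deriv X₂) t₀) t₀ :=
            (HasDerivAt.const_add a ((hY'd t₀ ht₀).hasDerivAt.const_mul b))
          exact h.deriv
        rw [hl, deriv_const] at h1
        exact h1
      have E1 := hab t₀ ht₀
      have E2 := hrel1 t₀ ht₀
      have E3 := hY2 t₀ ht₀
      have E4 := hY1 t₀ ht₀
      simp only [X₁] at E1
      have key : b ^ 2 * (C ^ 2 - 1) ^ 2 = 0 := by
        linear_combination
          (b * deriv X₂ t₀) * E1 - ((t₀ - C ^ 2) * b * deriv X₂ t₀) * E2
          - (b ^ 2 / 2) * E4 + ((t₀ - C ^ 2) * b ^ 2 / 2) * E3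
          - ((t₀ - C ^ 2) * b * X₂ t₀) * hrel2
      rcases mul_eq_zero.1 key with h | h
      · exact hb (pow_eq_zero_iff two_ne_zero |>.1 h)
      · exact hCsq (pow_eq_zero_iff two_ne_zero |>.1 h)
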